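/- Let E be a directed graph, let H ⊆ E^0 be a hereditary subset, and let β be a closed path in E whose base vertex s(β) belongs to the hereditary saturated closure \overline{H}. Then the vertex set β^0 of β intersects H. -/

import Mathlib

/-- A directed graph `E = (E⁰, E¹, r, s)`: `V` is the vertex set `E⁰`, `Edg` is the
edge set `E¹`, and `s`, `r` give the source and range of each edge. -/
structure DGraph (V : Type*) (Edg : Type*) where
  s : Edg → V
  r : Edg → V

namespace DGraph

variable {V Edg : Type*}

/-- There is an edge from `v` to `w`. -/
def Adj (G : DGraph V Edg) (v w : V) : Prop := ∃ e, G.s e = v ∧ G.r e = w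

/-- There is a path (possibly of length zero, i.e. a vertex) from `v` to `w`. -/
def Reaches (G : DGraph V Edg) : V → V → Prop := Relation.ReflTransGen G.Adj

/-- A subset `X ⊆ E⁰` is hereditary if `r(e) ∈ X` whenever `s(e) ∈ X`. -/
def Hereditary (G : DGraph V Edg) (X : Set V) : Prop := ∀ e, G.s e ∈ X → G.r e ∈ X

/-- A vertex is a finite emitter if `s⁻¹(v)` is finite and nonempty. -/
def FiniteEmitter (G : DGraph V Edg) (v : V) : Prop :=
  {e | G.s e = v}.Finite ∧ {e | G.s e = v}.Nonempty

/-- A subset `X ⊆ E⁰` is saturated if every finite emitter `v` with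
`r(s⁻¹(v)) ⊆ X` lies in `X`. -/
def Saturated (G : DGraph V Edg) (X : Set V) : Prop :=
  ∀ v, FiniteEmitter G v → (∀ e, G.s e = v → G.r e ∈ X) → v ∈ X

/-- The hereditary saturated closure of `X`: the smallest hereditary and saturated
subset of `E⁰` containing `X`. -/
def satClosure (G : DGraph V Edg) (X : Set V) : Set V :=
  ⋂₀ {Y | Hereditary G Y ∧ Saturated G Y ∧ X ⊆ Y}

/-- The consecutive edges of a path match up: `r(eᵢ) = s(eᵢ₊₁)`. -/
def IsChain (G : DGraph V Edg) (p : List Edg) : Prop :=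
  List.Chain' (fun e f => G.r e = G.s f) p

/-- `p` is a closed path (of length ≥ 1) based at `v`. -/
def IsClosedPathAt (G : DGraph V Edg) (p : List Edg) (v : V) : Prop :=
  ∃ hne : p ≠ [], IsChain G p ∧ G.s (p.head hne) = v ∧ G.r (p.getLast hne) = v

/-- `p` is a closed path (of length ≥ 1). -/
def IsClosedPath (G : DGraph V Edg) (p : List Edg) : Prop := ∃ v, IsClosedPathAt G p v

/-- The vertex set `α⁰ = {s(e₁), …, s(eₙ)}` of a path. -/
def pathVerts (G : DGraph V Edg) (p : List Edg) : Set V := {w | ∃ e ∈ p, G.s e = w}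

/-- An exit of a closed path `e₁⋯eₙ` is an edge `f` with `s(f) = s(eᵢ)` and
`f ≠ eᵢ` for some `i`. -/
def IsExitOf (G : DGraph V Edg) (f : Edg) (p : List Edg) : Prop :=
  ∃ e ∈ p, G.s f = G.s e ∧ f ≠ e

/-- `p` is a simple closed path based at `v`: a closed path whose sources are
pairwise distinct. -/
def IsSimpleClosedPathAt (G : DGraph V Edg) (p : List Edg) (v : V) : Prop :=
  IsClosedPathAt G p v ∧ (p.map G.s).Nodup

end DGraph

/-- if `H ⊆ E⁰` is hereditary and `β` is a closed path whose base
vertex lies in the hereditary saturated closure of `H`, then the vertex set of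
`β` intersects `H`. -/
lemma reaches_of_mem_hereditary {V Edg : Type*} (G : DGraph V Edg) {H : Set V}
    (hH : G.Hereditary H) {a b : V} (hr : G.Reaches a b) (ha : a ∈ H) : b ∈ H := by
  induction hr with
  | refl => exact ha
  | tail _ h ih =>
    obtain ⟨e, hs, hre⟩ := h
    subst hs; subst hre
    exact hH e ih

lemma chain_reaches {V Edg : Type*} (G : DGraph V Edg) :
    ∀ (p : List Edg) (hne : p ≠ []), G.IsChain p →
      G.Reaches (G.s (p.head hne)) (G.r (p.getLast hne))
  | [], hne, _ => absurd rfl hne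
  | [e], _, _ => Relation.ReflTransGen.single ⟨e, rfl, rfl⟩
  | e :: f :: t, _, hc => by
    obtain ⟨h1, h2⟩ := List.isChain_cons_cons.mp hc
    have := chain_reaches G (f :: t) (by simp) h2
    refine Relation.ReflTransGen.head ⟨e, rfl, rfl⟩ ?_
    rw [h1]
    simpa [DGraph.Reaches] using this

theorem stmt2 {V Edg : Type*} (G : DGraph V Edg) (H : Set V) (hH : G.Hereditary H)
    (β : List Edg) (v : V) (hβ : G.IsClosedPathAt β v) (hv : v ∈ G.satClosure H) :
    (G.pathVerts β ∩ H).Nonempty := by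
  by_contra hne
  rw [Set.not_nonempty_iff_eq_empty] at hne
  obtain ⟨hb, hchain, hhead, hlast⟩ := hβ
  -- Y : vertices that do not reach v
  have hY : {w | ¬ G.Reaches w v} ∈ {Y | G.Hereditary Y ∧ G.Saturated Y ∧ H ⊆ Y} := by
    refine ⟨?_, ?_, ?_⟩
    · intro e hse hre
      exact hse (Relation.ReflTransGen.head ⟨e, rfl, rfl⟩ hre)
    · intro w hw hall hwv
      rcases Relation.ReflTransGen.cases_head hwv with h | ⟨u, hadj, hu⟩
      · -- w = v : contradiction since r(first edge of β) reaches v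
        subst h
        obtain ⟨e0, he0⟩ : ∃ e0, e0 ∈ β ∧ G.s e0 = w := by
          refine ⟨β.head hb, List.head_mem hb, hhead⟩
        have : G.Reaches (G.r (β.head hb)) w := by
          match β, hb with
          | [e], _ =>
            simp only [List.head_cons, List.getLast_singleton] at hlast ⊢
            rw [hlast]
            exact Relation.ReflTransGen.refl
          | e :: f :: t, _ =>
            obtain ⟨h1, h2⟩ := List.isChain_cons_cons.mp hchain
            have := chain_reaches G (f :: t) (by simp) h2
            simp only [List.head_cons] at this ⊢
            rw [h1]
            have hl : (e :: f :: t).getLast (by simp) = (f :: t).getLast (by simp) := by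
              simp [List.getLast]
            rw [hl] at hlast
            rw [hlast] at this
            exact this
        exact hall (β.head hb) hhead this
      · obtain ⟨e, hse, hre⟩ := hadj
        exact hall e hse (hre ▸ hu)
    · intro h hh hr
      have hvH : v ∈ H := reaches_of_mem_hereditary G hH hr hh
      have hvP : v ∈ G.pathVerts β := ⟨β.head hb, List.head_mem hb, hhead⟩
      have : v ∈ G.pathVerts β ∩ H := ⟨hvP, hvH⟩
      rw [hne] at this
      exact this
  have := hv _ hY
  exact this Relation.ReflTransGen.refl
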